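/- Let X₁,…,X_p, C and R′ be random variables with finitely many values on a finite probability space such that R′ is independent of the tuple (X₁,…,X_p,C), and let C′ = g(X₁, C, R′) for some function g. Then I(X₁:⋯:X_p | (C, C′)) ≤ I(X₁:⋯:X_p | C). -/

import Mathlib

open scoped BigOperators

noncomputable section

/-- Base-2 Shannon entropy of a finitely supported (sub)probability vector. -/
def shannonH {V : Type} [Fintype V] (q : V → ℝ) : ℝ :=
  -∑ a, q a * Real.logb 2 (q a)

/-- Distribution (probability mass function) of a random variable `X` on a finite
probability space with probability mass function `μ`. -/
def pdist {Ω V : Type} [Fintype Ω] [DecidableEq V] (μ : Ω → ℝ) (X : Ω → V) : V → ℝ :=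
  fun a => ∑ ω, if X ω = a then μ ω else 0

/-- Shannon entropy `H(X)` of a random variable. -/
def entH {Ω V : Type} [Fintype Ω] [Fintype V] [DecidableEq V] (μ : Ω → ℝ) (X : Ω → V) : ℝ :=
  shannonH (pdist μ X)

/-- Conditional entropy `H(X|Y) = H(X,Y) − H(Y)`. -/
def condH {Ω V W : Type} [Fintype Ω] [Fintype V] [DecidableEq V] [Fintype W] [DecidableEq W]
    (μ : Ω → ℝ) (X : Ω → V) (Y : Ω → W) : ℝ :=
  entH μ (fun ω => (X ω, Y ω)) - entH μ Y

/-- Mutual information `I(X:Y) = H(X) + H(Y) − H(X,Y)`. -/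
def mutualI {Ω V W : Type} [Fintype Ω] [Fintype V] [DecidableEq V] [Fintype W] [DecidableEq W]
    (μ : Ω → ℝ) (X : Ω → V) (Y : Ω → W) : ℝ :=
  entH μ X + entH μ Y - entH μ (fun ω => (X ω, Y ω))

/-- Total correlation `I(X₁:⋯:X_p) = Σᵢ H(Xᵢ) − H(X₁,…,X_p)`. -/
def totCorr {Ω : Type} [Fintype Ω] {p : ℕ} {V : Fin p → Type}
    [∀ i, Fintype (V i)] [∀ i, DecidableEq (V i)]
    (μ : Ω → ℝ) (X : ∀ i, Ω → V i) : ℝ :=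
  (∑ i, entH μ (X i)) - entH μ (fun ω => (fun i => X i ω))

/-- Conditional total correlation `I(X₁:⋯:X_p|C) = Σᵢ H(Xᵢ|C) − H(X₁,…,X_p|C)`. -/
def condTotCorr {Ω : Type} [Fintype Ω] {p : ℕ} {V : Fin p → Type}
    [∀ i, Fintype (V i)] [∀ i, DecidableEq (V i)] {W : Type} [Fintype W] [DecidableEq W]
    (μ : Ω → ℝ) (X : ∀ i, Ω → V i) (C : Ω → W) : ℝ :=
  (∑ i, condH μ (X i) C) - condH μ (fun ω => (fun i => X i ω)) C



namespace S11
variable {Ω : Type} [Fintype Ω]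

def L {V : Type} [Fintype V] [DecidableEq V] (μ : Ω → ℝ) (Y : Ω → V) : ℝ :=
  ∑ ω, μ ω * Real.logb 2 (pdist μ Y (Y ω))

lemma pdist_nonneg {V : Type} [DecidableEq V] (μ : Ω → ℝ) (hμ0 : ∀ ω, 0 ≤ μ ω)
    (Y : Ω → V) (a : V) : 0 ≤ pdist μ Y a :=
  Finset.sum_nonneg fun ω _ => by by_cases h : Y ω = a <;> simp [h, hμ0 ω]

lemma mu_le_pdist {V : Type} [DecidableEq V] (μ : Ω → ℝ) (hμ0 : ∀ ω, 0 ≤ μ ω)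
    (Y : Ω → V) (ω : Ω) : μ ω ≤ pdist μ Y (Y ω) := by
  have := Finset.single_le_sum (f := fun ω' => if Y ω' = Y ω then μ ω' else 0)
    (fun ω' _ => by by_cases h : Y ω' = Y ω <;> simp [h, hμ0 ω'])
    (Finset.mem_univ ω)
  simpa [pdist] using this

lemma pdist_sum {V : Type} [Fintype V] [DecidableEq V] (μ : Ω → ℝ) (hμ1 : ∑ ω, μ ω = 1)
    (Y : Ω → V) : ∑ a, pdist μ Y a = 1 := by
  rw [← hμ1]
  unfold pdist
  rw [Finset.sum_comm]
  exact Finset.sum_congr rfl fun ω _ => by simp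

lemma sum_fiber {V : Type} [Fintype V] [DecidableEq V] (μ : Ω → ℝ) (Y : Ω → V) (f : V → ℝ) :
    ∑ ω, μ ω * f (Y ω) = ∑ a, pdist μ Y a * f a := by
  unfold pdist
  simp only [Finset.sum_mul, ite_mul, zero_mul]
  rw [Finset.sum_comm]
  refine Finset.sum_congr rfl fun ω _ => ?_
  rw [Finset.sum_ite_eq]
  simp

lemma pdist_comp {V V' : Type} [Fintype V] [DecidableEq V] [DecidableEq V']
    (μ : Ω → ℝ) (Y : Ω → V) (φ : V → V') (b : V') :
    pdist μ (fun ω => φ (Y ω)) b = ∑ a, if φ a = b then pdist μ Y a else 0 := by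
  calc pdist μ (fun ω => φ (Y ω)) b
      = ∑ ω, ∑ a, if Y ω = a then (if φ a = b then μ ω else 0) else 0 := by
        refine Finset.sum_congr rfl fun ω _ => ?_
        rw [Finset.sum_ite_eq]
        simp
    _ = ∑ a, if φ a = b then pdist μ Y a else 0 := by
        rw [Finset.sum_comm]
        refine Finset.sum_congr rfl fun a _ => ?_
        by_cases h : φ a = b <;> simp [h, pdist]

lemma L_comp_inj {V V' : Type} [Fintype V] [DecidableEq V] [Fintype V'] [DecidableEq V']
    (μ : Ω → ℝ) (Y : Ω → V) (φ : V → V') (hφ : Function.Injective φ) :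
    L μ (fun ω => φ (Y ω)) = L μ Y := by
  unfold L
  refine Finset.sum_congr rfl fun ω _ => ?_
  congr 1
  unfold pdist
  refine congrArg _ (Finset.sum_congr rfl fun ω' _ => ?_)
  simp [hφ.eq_iff]

lemma entH_eq_L {V : Type} [Fintype V] [DecidableEq V] (μ : Ω → ℝ) (Y : Ω → V) :
    entH μ Y = -(L μ Y) := by
  unfold entH shannonH L
  rw [sum_fiber μ Y (fun a => Real.logb 2 (pdist μ Y a))]

lemma marg_fst {A' Z' : Type} [Fintype A'] [DecidableEq A'] [Fintype Z'] [DecidableEq Z']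
    (μ : Ω → ℝ) (A : Ω → A') (Z : Ω → Z') (z : Z') :
    ∑ a, pdist μ (fun ω => (A ω, Z ω)) (a, z) = pdist μ Z z := by
  unfold pdist
  rw [Finset.sum_comm]
  refine Finset.sum_congr rfl fun ω _ => ?_
  by_cases h : Z ω = z <;> simp [h, Prod.ext_iff, Finset.sum_ite_eq]

lemma marg_snd {Z' B' : Type} [Fintype Z'] [DecidableEq Z'] [Fintype B'] [DecidableEq B']
    (μ : Ω → ℝ) (Z : Ω → Z') (B : Ω → B') (z : Z') :
    ∑ b, pdist μ (fun ω => (Z ω, B ω)) (z, b) = pdist μ Z z := by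
  unfold pdist
  rw [Finset.sum_comm]
  refine Finset.sum_congr rfl fun ω _ => ?_
  by_cases h : Z ω = z <;> simp [h, Prod.ext_iff, Finset.sum_ite_eq]

lemma cmi_nonneg {A' Z' B' : Type} [Fintype A'] [DecidableEq A'] [Fintype Z'] [DecidableEq Z']
    [Fintype B'] [DecidableEq B'] (μ : Ω → ℝ) (hμ0 : ∀ ω, 0 ≤ μ ω) (hμ1 : ∑ ω, μ ω = 1)
    (A : Ω → A') (Z : Ω → Z') (B : Ω → B') :
    L μ (fun ω => (A ω, Z ω)) + L μ (fun ω => (Z ω, B ω)) ≤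
      L μ (fun ω => (A ω, (Z ω, B ω))) + L μ Z := by
  set pAZ := pdist μ (fun ω => (A ω, Z ω)) with hpAZ
  set pZB := pdist μ (fun ω => (Z ω, B ω)) with hpZB
  set pT := pdist μ (fun ω => (A ω, (Z ω, B ω))) with hpT
  set pZ := pdist μ Z with hpZ
  set f : A' × (Z' × B') → ℝ :=
    fun t => pAZ (t.1, t.2.1) * pZB t.2 / (pT t * pZ t.2.1) with hf
  have hAZ0 : ∀ x, 0 ≤ pAZ x := pdist_nonneg μ hμ0 _
  have hZB0 : ∀ x, 0 ≤ pZB x := pdist_nonneg μ hμ0 _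
  have hT0 : ∀ x, 0 ≤ pT x := pdist_nonneg μ hμ0 _
  have hZ0 : ∀ x, 0 ≤ pZ x := pdist_nonneg μ hμ0 _
  have key : ∑ ω, μ ω * f (A ω, (Z ω, B ω)) ≤ 1 := by
    rw [sum_fiber μ (fun ω => (A ω, (Z ω, B ω))) f]
    have hb : ∀ t : A' × (Z' × B'),
        pT t * f t ≤ pAZ (t.1, t.2.1) * pZB t.2 / pZ t.2.1 := by
      intro t
      by_cases ht : pT t = 0
      · simp only [ht, zero_mul]
        exact div_nonneg (mul_nonneg (hAZ0 _) (hZB0 _)) (hZ0 _)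
      · refine le_of_eq ?_
        rw [hf]
        rw [mul_div_assoc']
        rw [mul_div_mul_left _ _ ht]
    calc ∑ t, pT t * f t
        ≤ ∑ t : A' × (Z' × B'), pAZ (t.1, t.2.1) * pZB t.2 / pZ t.2.1 :=
          Finset.sum_le_sum fun t _ => hb t
      _ = ∑ z, pZ z * pZ z / pZ z := by
          rw [Fintype.sum_prod_type]
          rw [Finset.sum_comm]
          simp only [Fintype.sum_prod_type]
          refine Finset.sum_congr rfl fun zb _ => ?_
          have h1 : ∑ a, pAZ (a, zb) = pZ zb := marg_fst μ A Z zb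
          have h2 : ∑ b, pZB (zb, b) = pZ zb := marg_snd μ Z B zb
          simp only [← Finset.sum_div]
          congr 1
          rw [Finset.sum_comm]
          simp only [← Finset.mul_sum]
          simp only [← Finset.sum_mul]
          rw [h1, h2]
      _ = ∑ z, pZ z := by
          refine Finset.sum_congr rfl fun z _ => ?_
          by_cases h : pZ z = 0
          · simp [h]
          · rw [mul_div_assoc, div_self h, mul_one]
      _ = 1 := pdist_sum μ hμ1 Z
  have hω : ∀ ω : Ω,
      μ ω * Real.logb 2 (pAZ (A ω, Z ω)) + μ ω * Real.logb 2 (pZB (Z ω, B ω))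
        - μ ω * Real.logb 2 (pT (A ω, (Z ω, B ω))) - μ ω * Real.logb 2 (pZ (Z ω))
      ≤ μ ω * (f (A ω, (Z ω, B ω)) - 1) / Real.log 2 := by
    intro ω
    rcases eq_or_lt_of_le (hμ0 ω) with hμ | hμ
    · simp [← hμ]
    · have h1 : 0 < pAZ (A ω, Z ω) := lt_of_lt_of_le hμ (mu_le_pdist μ hμ0 _ ω)
      have h2 : 0 < pZB (Z ω, B ω) := lt_of_lt_of_le hμ (mu_le_pdist μ hμ0 _ ω)
      have h3 : 0 < pT (A ω, (Z ω, B ω)) := lt_of_lt_of_le hμ (mu_le_pdist μ hμ0 _ ω)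
      have h4 : 0 < pZ (Z ω) := lt_of_lt_of_le hμ (mu_le_pdist μ hμ0 _ ω)
      have hft : 0 < f (A ω, (Z ω, B ω)) := by
        rw [hf]
        exact div_pos (mul_pos h1 h2) (mul_pos h3 h4)
      have hlog : Real.logb 2 (pAZ (A ω, Z ω)) + Real.logb 2 (pZB (Z ω, B ω))
          - Real.logb 2 (pT (A ω, (Z ω, B ω))) - Real.logb 2 (pZ (Z ω))
          = Real.logb 2 (f (A ω, (Z ω, B ω))) := by
        rw [hf]
        rw [Real.logb_div (by positivity) (by positivity)]
        rw [Real.logb_mul (ne_of_gt h1) (ne_of_gt h2)]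
        rw [Real.logb_mul (ne_of_gt h3) (ne_of_gt h4)]
        ring
      have hfactor : μ ω * Real.logb 2 (pAZ (A ω, Z ω)) + μ ω * Real.logb 2 (pZB (Z ω, B ω))
          - μ ω * Real.logb 2 (pT (A ω, (Z ω, B ω))) - μ ω * Real.logb 2 (pZ (Z ω))
          = μ ω * Real.logb 2 (f (A ω, (Z ω, B ω))) := by
        rw [← hlog]; ring
      rw [hfactor, Real.logb, mul_div_assoc]
      have hlb : Real.log (f (A ω, (Z ω, B ω))) ≤ f (A ω, (Z ω, B ω)) - 1 :=
        Real.log_le_sub_one_of_pos hft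
      have hlog2 : (0:ℝ) < Real.log 2 := Real.log_pos (by norm_num)
      gcongr
  have hsum := Finset.sum_le_sum (fun ω (_ : ω ∈ Finset.univ) => hω ω)
  have hL : ∑ ω, (μ ω * Real.logb 2 (pAZ (A ω, Z ω)) + μ ω * Real.logb 2 (pZB (Z ω, B ω))
        - μ ω * Real.logb 2 (pT (A ω, (Z ω, B ω))) - μ ω * Real.logb 2 (pZ (Z ω)))
      = L μ (fun ω => (A ω, Z ω)) + L μ (fun ω => (Z ω, B ω))
        - L μ (fun ω => (A ω, (Z ω, B ω))) - L μ Z := by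
    simp only [Finset.sum_sub_distrib, Finset.sum_add_distrib]
    rfl
  have hR : ∑ ω, μ ω * (f (A ω, (Z ω, B ω)) - 1) / Real.log 2
      = ((∑ ω, μ ω * f (A ω, (Z ω, B ω))) - 1) / Real.log 2 := by
    rw [← Finset.sum_div]
    congr 1
    simp only [mul_sub, mul_one, Finset.sum_sub_distrib, hμ1]
  have hlog2 : (0:ℝ) < Real.log 2 := Real.log_pos (by norm_num)
  have hR2 : ((∑ ω, μ ω * f (A ω, (Z ω, B ω))) - 1) / Real.log 2 ≤ 0 :=
    div_nonpos_of_nonpos_of_nonneg (by linarith) (le_of_lt hlog2)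
  rw [hL, hR] at hsum
  linarith

lemma fact {α W T : Type} [Fintype α] [DecidableEq α] [Fintype W] [DecidableEq W]
    [Fintype T] [DecidableEq T]
    (μ : Ω → ℝ) (Y : Ω → α) (R : Ω → W)
    (hind : ∀ y r, pdist μ (fun ω => (Y ω, R ω)) (y, r) = pdist μ Y y * pdist μ R r)
    (h : α → W → T) (y : α) (t : T) :
    pdist μ (fun ω => (Y ω, h (Y ω) (R ω))) (y, t)
      = pdist μ Y y * ∑ r, (if h y r = t then pdist μ R r else 0) := by
  have hc : pdist μ (fun ω => (Y ω, h (Y ω) (R ω))) (y, t)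
      = ∑ x : α × W, if (x.1, h x.1 x.2) = (y, t)
          then pdist μ (fun ω => (Y ω, R ω)) x else 0 :=
    pdist_comp μ (fun ω => (Y ω, R ω)) (fun x => (x.1, h x.1 x.2)) (y, t)
  rw [hc, Fintype.sum_prod_type]
  have hstep : ∀ a : α, ∀ r : W,
      (if ((a : α), h a r) = (y, t) then pdist μ (fun ω => (Y ω, R ω)) (a, r) else 0)
      = if a = y then (if h y r = t then pdist μ Y y * pdist μ R r else 0) else 0 := by
    intro a r
    by_cases ha : a = y
    · subst ha; simp [Prod.ext_iff, hind]
    · simp [Prod.ext_iff, ha]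
  simp only [hstep]
  rw [Finset.sum_comm]
  simp [Finset.mul_sum, mul_ite, mul_zero]

lemma indep_comp {α α₀ W : Type} [Fintype α] [DecidableEq α] [Fintype α₀] [DecidableEq α₀]
    [Fintype W] [DecidableEq W]
    (μ : Ω → ℝ) (Y : Ω → α) (R : Ω → W)
    (hind : ∀ y r, pdist μ (fun ω => (Y ω, R ω)) (y, r) = pdist μ Y y * pdist μ R r)
    (φ : α → α₀) (b : α₀) (r : W) :
    pdist μ (fun ω => (φ (Y ω), R ω)) (b, r)
      = pdist μ (fun ω => φ (Y ω)) b * pdist μ R r := by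
  have hc : pdist μ (fun ω => (φ (Y ω), R ω)) (b, r)
      = ∑ x : α × W, if (φ x.1, x.2) = (b, r)
          then pdist μ (fun ω => (Y ω, R ω)) x else 0 :=
    pdist_comp μ (fun ω => (Y ω, R ω)) (fun x => (φ x.1, x.2)) (b, r)
  rw [hc, pdist_comp μ Y φ b, Finset.sum_mul, Fintype.sum_prod_type]
  refine Finset.sum_congr rfl fun a _ => ?_
  by_cases ha : φ a = b
  · simp [Prod.ext_iff, ha, hind, ite_mul]
  · simp [Prod.ext_iff, ha]

lemma L_cond_kernel {α T : Type} [Fintype α] [DecidableEq α] [Fintype T] [DecidableEq T]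
    (μ : Ω → ℝ) (hμ0 : ∀ ω, 0 ≤ μ ω) (Y : Ω → α) (Z : Ω → T) (κ : α → T → ℝ)
    (hfac : ∀ y t, pdist μ (fun ω => (Y ω, Z ω)) (y, t) = pdist μ Y y * κ y t) :
    L μ (fun ω => (Y ω, Z ω)) - L μ Y = ∑ ω, μ ω * Real.logb 2 (κ (Y ω) (Z ω)) := by
  unfold L
  rw [← Finset.sum_sub_distrib]
  refine Finset.sum_congr rfl fun ω _ => ?_
  rcases eq_or_lt_of_le (hμ0 ω) with hμ | hμ
  · simp [← hμ]
  · have h1 : 0 < pdist μ (fun ω' => (Y ω', Z ω')) (Y ω, Z ω) :=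
      lt_of_lt_of_le hμ (mu_le_pdist μ hμ0 (fun ω' => (Y ω', Z ω')) ω)
    have h2 : 0 < pdist μ Y (Y ω) := lt_of_lt_of_le hμ (mu_le_pdist μ hμ0 Y ω)
    have heq := hfac (Y ω) (Z ω)
    have h3 : 0 < κ (Y ω) (Z ω) := by nlinarith
    rw [heq, Real.logb_mul (ne_of_gt h2) (ne_of_gt h3)]
    ring

end S11

open S11 in
/-- **Further public communication cannot increase the conditional total correlation.**
If `R′` is independent of `(X₁,…,X_p,C)` and `C′ = g(X₁, C, R′)`, then
`I(X₁:⋯:X_p | (C,C′)) ≤ I(X₁:⋯:X_p | C)`. -/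
theorem stmt11 {Ω : Type} [Fintype Ω] {p : ℕ} (hp : 1 ≤ p) {V : Fin p → Type}
    [∀ i, Fintype (V i)] [∀ i, DecidableEq (V i)]
    {U W T : Type} [Fintype U] [DecidableEq U] [Fintype W] [DecidableEq W]
    [Fintype T] [DecidableEq T]
    (μ : Ω → ℝ) (hμ0 : ∀ ω, 0 ≤ μ ω) (hμ1 : ∑ ω, μ ω = 1)
    (X : ∀ i, Ω → V i) (C : Ω → U) (R' : Ω → W)
    (hindep : ∀ (a : ∀ i, V i) (c : U) (r : W),
      pdist μ (fun ω => (((fun i => X i ω), C ω), R' ω)) ((a, c), r)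
        = pdist μ (fun ω => ((fun i => X i ω), C ω)) (a, c) * pdist μ R' r)
    (g : V ⟨0, hp⟩ → U → W → T) (C' : Ω → T)
    (hC' : ∀ ω, C' ω = g (X ⟨0, hp⟩ ω) (C ω) (R' ω)) :
    condTotCorr μ X (fun ω => (C ω, C' ω)) ≤ condTotCorr μ X C := by
  classical
  -- independence in curried form
  have hindY : ∀ (y : (∀ i, V i) × U) (r : W),
      pdist μ (fun ω => (((fun i => X i ω), C ω), R' ω)) (y, r)
        = pdist μ (fun ω => ((fun i => X i ω), C ω)) y * pdist μ R' r := by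
    rintro ⟨a, c⟩ r; exact hindep a c r
  -- kernel
  set k : V ⟨0, hp⟩ → U → T → ℝ :=
    fun a c t => ∑ r, if g a c r = t then pdist μ R' r else 0 with hk
  -- factorization for the full tuple
  have hfacY : ∀ (y : (∀ i, V i) × U) (t : T),
      pdist μ (fun ω => (((fun i => X i ω), C ω), C' ω)) (y, t)
        = pdist μ (fun ω => ((fun i => X i ω), C ω)) y * k (y.1 ⟨0, hp⟩) y.2 t := by
    intro y t
    have hfun : (fun ω => (((fun i => X i ω), C ω), C' ω))
        = (fun ω => (((fun i => X i ω), C ω),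
            (fun (y : (∀ i, V i) × U) (r : W) => g (y.1 ⟨0, hp⟩) y.2 r)
              ((fun i => X i ω), C ω) (R' ω))) := by
      funext ω; simp [hC' ω]
    rw [hfun]
    exact fact μ (fun ω => ((fun i => X i ω), C ω)) R' hindY
      (fun y r => g (y.1 ⟨0, hp⟩) y.2 r) y t
  -- independence of ((X₀, C), R')
  have hindY0 : ∀ (y : V ⟨0, hp⟩ × U) (r : W),
      pdist μ (fun ω => ((X ⟨0, hp⟩ ω, C ω), R' ω)) (y, r)
        = pdist μ (fun ω => (X ⟨0, hp⟩ ω, C ω)) y * pdist μ R' r := by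
    intro y r
    exact indep_comp μ (fun ω => ((fun i => X i ω), C ω)) R' hindY
      (fun z => (z.1 ⟨0, hp⟩, z.2)) y r
  -- factorization for (X₀, C)
  have hfacY0 : ∀ (y : V ⟨0, hp⟩ × U) (t : T),
      pdist μ (fun ω => ((X ⟨0, hp⟩ ω, C ω), C' ω)) (y, t)
        = pdist μ (fun ω => (X ⟨0, hp⟩ ω, C ω)) y * k y.1 y.2 t := by
    intro y t
    have hfun : (fun ω => ((X ⟨0, hp⟩ ω, C ω), C' ω))
        = (fun ω => ((X ⟨0, hp⟩ ω, C ω),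
            (fun (y : V ⟨0, hp⟩ × U) (r : W) => g y.1 y.2 r)
              (X ⟨0, hp⟩ ω, C ω) (R' ω))) := by
      funext ω; simp [hC' ω]
    rw [hfun]
    exact fact μ (fun ω => (X ⟨0, hp⟩ ω, C ω)) R' hindY0
      (fun y r => g y.1 y.2 r) y t
  -- the two kernel identities
  have hkerY : L μ (fun ω => (((fun i => X i ω), C ω), C' ω))
      - L μ (fun ω => ((fun i => X i ω), C ω))
      = ∑ ω, μ ω * Real.logb 2 (k (X ⟨0, hp⟩ ω) (C ω) (C' ω)) :=
    L_cond_kernel μ hμ0 (fun ω => ((fun i => X i ω), C ω)) C'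
      (fun y t => k (y.1 ⟨0, hp⟩) y.2 t) hfacY
  have hkerY0 : L μ (fun ω => ((X ⟨0, hp⟩ ω, C ω), C' ω))
      - L μ (fun ω => (X ⟨0, hp⟩ ω, C ω))
      = ∑ ω, μ ω * Real.logb 2 (k (X ⟨0, hp⟩ ω) (C ω) (C' ω)) :=
    L_cond_kernel μ hμ0 (fun ω => (X ⟨0, hp⟩ ω, C ω)) C'
      (fun y t => k y.1 y.2 t) hfacY0
  -- reshapes
  have hre1 : L μ (fun ω => ((fun i => X i ω), (C ω, C' ω)))
      = L μ (fun ω => (((fun i => X i ω), C ω), C' ω)) :=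
    L_comp_inj μ (fun ω => (((fun i => X i ω), C ω), C' ω))
      (fun x => (x.1.1, (x.1.2, x.2))) (Equiv.prodAssoc _ _ _).injective
  have hre2 : L μ (fun ω => (X ⟨0, hp⟩ ω, (C ω, C' ω)))
      = L μ (fun ω => ((X ⟨0, hp⟩ ω, C ω), C' ω)) :=
    L_comp_inj μ (fun ω => ((X ⟨0, hp⟩ ω, C ω), C' ω))
      (fun x => (x.1.1, (x.1.2, x.2))) (Equiv.prodAssoc _ _ _).injective
  -- CMI nonnegativity for each i
  have hcmi : ∀ i : Fin p,
      L μ (fun ω => (X i ω, C ω)) + L μ (fun ω => (C ω, C' ω)) ≤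
        L μ (fun ω => (X i ω, (C ω, C' ω))) + L μ C :=
    fun i => cmi_nonneg μ hμ0 hμ1 (X i) C C'
  -- sum bound
  have hsingle := Finset.single_le_sum
    (f := fun i : Fin p => L μ (fun ω => (X i ω, (C ω, C' ω))) + L μ C
      - L μ (fun ω => (X i ω, C ω)) - L μ (fun ω => (C ω, C' ω)))
    (fun i _ => by linarith [hcmi i]) (Finset.mem_univ (⟨0, hp⟩ : Fin p))
  have hexp : ∑ i : Fin p, (L μ (fun ω => (X i ω, (C ω, C' ω))) + L μ C
      - L μ (fun ω => (X i ω, C ω)) - L μ (fun ω => (C ω, C' ω)))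
      = (∑ i, L μ (fun ω => (X i ω, (C ω, C' ω))))
        - (∑ i, L μ (fun ω => (X i ω, C ω)))
        + (p : ℝ) * L μ C - (p : ℝ) * L μ (fun ω => (C ω, C' ω)) := by
    rw [Finset.sum_sub_distrib, Finset.sum_sub_distrib, Finset.sum_add_distrib]
    simp [Finset.card_univ, mul_comm]
    ring
  -- unfold the goal
  simp only [condTotCorr, condH, entH_eq_L]
  rw [Finset.sum_sub_distrib, Finset.sum_sub_distrib]
  simp only [Finset.sum_neg_distrib, Finset.sum_const, Finset.card_univ, Fintype.card_fin,
    nsmul_eq_mul]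
  rw [hexp] at hsingle
  beta_reduce at hsingle
  linarith [hsingle, hkerY, hkerY0, hre1, hre2]

end
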